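/- Let 𝒮 be a finite ordered set of tuples in S × supp(P₁) × ⋯ × supp(P_N) with 𝒯(𝒮) ≠ ∅, and set Sᵢ = |supp(Pᵢ)|. Then there exists w* ∈ 𝒯(𝒮) minimizing c(·,𝒮) over 𝒯(𝒮) such that |{h : w*_h > 0}| ≤ Σᵢ₌₁ᴺ Sᵢ − N + 1. -/
import Mathlib


open MeasureTheory ENNReal

noncomputable section

/-- Euclidean space `ℝ^d`. -/
abbrev Euc (d : ℕ) := EuclideanSpace ℝ (Fin d)

/-- The (topological) support of a measure on `ℝ^d`: the set of points all of whose
neighborhoods have positive measure. -/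
def msupp {d : ℕ} (μ : MeasureTheory.Measure (Euc d)) : Set (Euc d) :=
  {x | ∀ U ∈ nhds x, μ U ≠ 0}

/-- A discrete probability measure: a probability measure with finite support. -/
def IsDiscreteProb {d : ℕ} (μ : MeasureTheory.Measure (Euc d)) : Prop :=
  IsProbabilityMeasure μ ∧ (msupp μ).Finite

/-- Finite second moment. -/
def FinSecondMoment {d : ℕ} (μ : MeasureTheory.Measure (Euc d)) : Prop :=
  ∫⁻ x, (‖x‖₊ : ℝ≥0∞) ^ 2 ∂μ < ⊤

/-- A coupling of `P` and `Q`: a measure on the product whose first marginal is `P`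
and second marginal is `Q`. -/
def IsCoupling {d : ℕ} (γ : MeasureTheory.Measure (Euc d × Euc d))
    (P Q : MeasureTheory.Measure (Euc d)) : Prop :=
  γ.map Prod.fst = P ∧ γ.map Prod.snd = Q

/-- Squared 2-Wasserstein distance: infimum of the quadratic transport cost over couplings. -/
def W2sq {d : ℕ} (P Q : MeasureTheory.Measure (Euc d)) : ℝ≥0∞ :=
  ⨅ γ ∈ {γ | IsCoupling γ P Q}, ∫⁻ p, (‖p.1 - p.2‖₊ : ℝ≥0∞) ^ 2 ∂γ

/-- A barycenter of `P 0, …, P (N-1)`: a probability measure with finite second moment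
minimizing the sum of squared Wasserstein distances over all such measures. -/
def IsBarycenter {d N : ℕ} (P : Fin N → MeasureTheory.Measure (Euc d))
    (Pbar : MeasureTheory.Measure (Euc d)) : Prop :=
  IsProbabilityMeasure Pbar ∧ FinSecondMoment Pbar ∧
    ∀ Q : MeasureTheory.Measure (Euc d), IsProbabilityMeasure Q → FinSecondMoment Q →
      ∑ i, W2sq Pbar (P i) ≤ ∑ i, W2sq Q (P i)

/-- A multi-coupling of `P 0, …, P (N-1)`: a probability measure on `(ℝ^d)^N` whose
`i`-th coordinate marginal is `P i`. -/
def IsMultiCoupling {d N : ℕ} (π : MeasureTheory.Measure (Fin N → Euc d))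
    (P : Fin N → MeasureTheory.Measure (Euc d)) : Prop :=
  IsProbabilityMeasure π ∧ ∀ i, π.map (fun x => x i) = P i

/-- The averaging map `(x₁, …, x_N) ↦ (x₁ + ⋯ + x_N)/N`. -/
def avgMap (d N : ℕ) : (Fin N → Euc d) → Euc d := fun x => (N : ℝ)⁻¹ • ∑ i, x i

/-- The set `S` of all centroids of support points, one from each measure. -/
def centroidSet {d N : ℕ} (P : Fin N → MeasureTheory.Measure (Euc d)) : Set (Euc d) :=
  {s | ∃ x : Fin N → Euc d, (∀ i, x i ∈ msupp (P i)) ∧ s = (N : ℝ)⁻¹ • ∑ i, x i}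

open scoped Classical

/-- The location-fixed transportation scheme `𝒯(𝒮)` for the ordered tuple family
`s_h = (q0 h, q h 1, …, q h N)`: nonnegative weights `w` such that for each `i` and each
support point `k` of `Pᵢ`, the total weight of tuples whose `i`-th entry is `k` equals the
mass `Pᵢ({k})`. -/
def schemeT {d N m : ℕ} (P : Fin N → MeasureTheory.Measure (Euc d))
    (suppF : Fin N → Finset (Euc d))
    (q0 : Fin m → Euc d) (q : Fin m → Fin N → Euc d) : Set (Fin m → ℝ) :=
  {w | (∀ h, 0 ≤ w h) ∧
    ∀ i, ∀ k ∈ suppF i,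
      ∑ h ∈ Finset.univ.filter (fun h => q h i = k), w h = (P i {k}).toReal}

/-- The measure `P(w, 𝒮) = Σ_h w_h δ_{q_{h0}}` associated with a weight vector `w`. -/
def schemeMeasure {d m : ℕ} (q0 : Fin m → Euc d) (w : Fin m → ℝ) :
    MeasureTheory.Measure (Euc d) :=
  ∑ h, ENNReal.ofReal (w h) • MeasureTheory.Measure.dirac (q0 h)

/-- The cost `c(w, 𝒮) = Σ_h w_h Σᵢ ‖q_{h0} - q_{hi}‖²`. -/
def schemeCost {d N m : ℕ} (q0 : Fin m → Euc d) (q : Fin m → Fin N → Euc d)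
    (w : Fin m → ℝ) : ℝ :=
  ∑ h, w h * ∑ i, ‖q0 h - q h i‖ ^ 2

/-- An `N`-star transport between a measure `Q` (supported in the finite set `JF`, with mass
`Q({j})` at `j`) and `P₁, …, P_N`: nonnegative `y i j k` with row sums `Σ_k y i j k = Q({j})`
and column sums `Σ_j y i j k = Pᵢ({k})`. -/
def IsNStar {d N : ℕ} (P : Fin N → MeasureTheory.Measure (Euc d))
    (suppF : Fin N → Finset (Euc d)) (Q : MeasureTheory.Measure (Euc d))
    (JF : Finset (Euc d)) (y : Fin N → Euc d → Euc d → ℝ) : Prop :=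
  (∀ i j k, 0 ≤ y i j k) ∧
  (∀ i, ∀ j ∈ JF, ∑ k ∈ suppF i, y i j k = (Q {j}).toReal) ∧
  (∀ i, ∀ k ∈ suppF i, ∑ j ∈ JF, y i j k = (P i {k}).toReal)

/-- The cost `c(y) = Σ_{i,j,k} ‖x_j - x_{ik}‖² y_{ijk}` of an `N`-star transport. -/
def nstarCost {d N : ℕ} (JF : Finset (Euc d)) (suppF : Fin N → Finset (Euc d))
    (y : Fin N → Euc d → Euc d → ℝ) : ℝ :=
  ∑ i, ∑ j ∈ JF, ∑ k ∈ suppF i, ‖j - k‖ ^ 2 * y i j k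

/-- if `𝒯(𝒮) ≠ ∅`, there exists a minimizer `w*` of the cost `c(·, 𝒮)` over
`𝒯(𝒮)` with at most `Σᵢ |supp(Pᵢ)| - N + 1` strictly positive entries. -/
lemma exists_kernel_vec {d N m : ℕ}
    (suppF : Fin N → Finset (Euc d)) (hS : ∀ i, (suppF i).Nonempty)
    (q : Fin m → Fin N → Euc d) (hq : ∀ h i, q h i ∈ suppF i)
    (K : Finset (Fin m)) (hK : ∑ i, ((suppF i).card - 1) + 1 < K.card) :
    ∃ z : Fin m → ℝ, z ≠ 0 ∧ (∀ h ∉ K, z h = 0) ∧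
      ∀ i, ∀ k ∈ suppF i, ∑ h ∈ Finset.univ.filter (fun h => q h i = k), z h = 0 := by
  set k₀ : Fin N → Euc d := fun i => (hS i).choose with hk₀
  have hk₀mem : ∀ i, k₀ i ∈ suppF i := fun i => (hS i).choose_spec
  set a : Option ((i : Fin N) × {k : Euc d // k ∈ (suppF i).erase (k₀ i)}) → Fin m → ℝ := fun o h =>
    match o with
    | none => 1
    | some ik => if q h ik.1 = ik.2.1 then 1 else 0 with ha
  set L : ({h : Fin m // h ∈ K} → ℝ) →ₗ[ℝ]
      (Option ((i : Fin N) × {k : Euc d // k ∈ (suppF i).erase (k₀ i)}) → ℝ) :=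
    { toFun := fun φ o => ∑ h : {h : Fin m // h ∈ K}, a o h.1 * φ h
      map_add' := by
        intro φ ψ; funext o
        simp [mul_add, Finset.sum_add_distrib]
      map_smul' := by
        intro c φ; funext o
        simp only [Pi.smul_apply, smul_eq_mul, RingHom.id_apply, Finset.mul_sum]
        exact Finset.sum_congr rfl fun h _ => by ring } with hL
  -- dimension count
  have hcardI : Fintype.card
      (Option ((i : Fin N) × {k : Euc d // k ∈ (suppF i).erase (k₀ i)}))
      = ∑ i, ((suppF i).card - 1) + 1 := by
    rw [Fintype.card_option, Fintype.card_sigma]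
    congr 1
    exact Finset.sum_congr rfl fun i _ => by
      rw [Fintype.card_coe, Finset.card_erase_of_mem (hk₀mem i)]
  have hnotinj : ¬ Function.Injective L := by
    intro hinj
    have h1 := LinearMap.finrank_le_finrank_of_injective hinj
    rw [Module.finrank_fintype_fun_eq_card, Module.finrank_fintype_fun_eq_card,
      Fintype.card_coe, hcardI] at h1
    omega
  have hker : ∃ φ : {h : Fin m // h ∈ K} → ℝ, φ ≠ 0 ∧ L φ = 0 := by
    rw [← LinearMap.ker_eq_bot] at hnotinj
    obtain ⟨φ, hφmem, hφ⟩ := (Submodule.ne_bot_iff _).mp hnotinj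
    exact ⟨φ, hφ, hφmem⟩
  obtain ⟨φ, hφ0, hφker⟩ := hker
  set z : Fin m → ℝ := fun h => if hh : h ∈ K then φ ⟨h, hh⟩ else 0 with hz
  have hzφ : ∀ h : {h : Fin m // h ∈ K}, z h.1 = φ h := by
    intro h; rw [hz]; simp
  have hzKzero : ∀ h ∉ K, z h = 0 := by intro h hh; rw [hz]; simp [hh]
  -- the fiber sums
  have fiber_eq : ∀ (i : Fin N) (k : Euc d),
      ∑ h ∈ Finset.univ.filter (fun h => q h i = k), z h
        = ∑ h : {h : Fin m // h ∈ K}, (if q h.1 i = k then 1 else 0) * φ h := by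
    intro i k
    have e1 : ∑ h : {h : Fin m // h ∈ K}, (if q h.1 i = k then 1 else 0) * φ h
        = ∑ h ∈ K, (if q h i = k then 1 else 0) * z h := by
      rw [← Finset.sum_coe_sort K (fun h => (if q h i = k then 1 else 0) * z h)]
      exact Finset.sum_congr rfl fun h _ => by rw [hzφ h]
    rw [e1]
    have e2 : ∑ h ∈ K, (if q h i = k then 1 else 0) * z h
        = ∑ h ∈ K.filter (fun h => q h i = k), z h := by
      rw [Finset.sum_filter]
      exact Finset.sum_congr rfl fun h _ => by split_ifs <;> simp
    rw [e2]
    refine (Finset.sum_subset (Finset.filter_subset_filter _ (Finset.subset_univ K)) ?_).symm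
    intro h hmem hnot
    by_cases hK' : h ∈ K
    · exact absurd (Finset.mem_filter.mpr ⟨hK', (Finset.mem_filter.mp hmem).2⟩) hnot
    · exact hzKzero h hK'
  have htotal : ∑ h, z h = 0 := by
    have e1 : ∑ h, z h = ∑ h ∈ K, z h :=
      (Finset.sum_subset (Finset.subset_univ K) (fun h _ hh => hzKzero h hh)).symm
    have e2 : ∑ h ∈ K, z h = ∑ h : {h : Fin m // h ∈ K}, φ h := by
      rw [← Finset.sum_coe_sort K z]
      exact Finset.sum_congr rfl fun h _ => hzφ h
    have e3 : L φ none = 0 := by rw [hφker]; rfl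
    rw [e1, e2]
    simpa [hL, ha] using e3
  have herase : ∀ (i : Fin N) (k : Euc d) (hk : k ∈ (suppF i).erase (k₀ i)),
      ∑ h ∈ Finset.univ.filter (fun h => q h i = k), z h = 0 := by
    intro i k hk
    have e3 : L φ (some ⟨i, ⟨k, hk⟩⟩) = 0 := by rw [hφker]; rfl
    rw [fiber_eq i k]
    simpa [hL, ha] using e3
  refine ⟨z, ?_, hzKzero, ?_⟩
  · obtain ⟨h, hh⟩ := Function.ne_iff.mp hφ0
    intro hcon
    apply hh
    rw [← hzφ h, hcon]; rfl
  · intro i k hk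
    by_cases hkk : k = k₀ i
    · subst hkk
      have hpart : ∑ k' ∈ suppF i, ∑ h ∈ Finset.univ.filter (fun h => q h i = k'), z h
          = ∑ h, z h := Finset.sum_fiberwise_of_maps_to (fun h _ => hq h i) z
      have hsplit := Finset.add_sum_erase (suppF i) (fun k' =>
        ∑ h ∈ Finset.univ.filter (fun h => q h i = k'), z h) hk
      have hrest : ∑ k' ∈ (suppF i).erase (k₀ i),
          ∑ h ∈ Finset.univ.filter (fun h => q h i = k'), z h = 0 :=
        Finset.sum_eq_zero fun k' hk' => herase i k' hk'
      rw [htotal] at hpart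
      rw [hpart, hrest] at hsplit
      linarith
    · exact herase i k (Finset.mem_erase.mpr ⟨hkk, hk⟩)

theorem stmt12 {d N m : ℕ} (P : Fin N → MeasureTheory.Measure (Euc d))
    (hP : ∀ i, IsDiscreteProb (P i))
    (suppF : Fin N → Finset (Euc d)) (hsuppF : ∀ i, ↑(suppF i) = msupp (P i))
    (q0 : Fin m → Euc d) (q : Fin m → Fin N → Euc d)
    (hq0 : ∀ h, q0 h ∈ centroidSet P) (hq : ∀ h i, q h i ∈ msupp (P i))
    (hT : (schemeT P suppF q0 q).Nonempty) :
    ∃ w ∈ schemeT P suppF q0 q,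
      (∀ w' ∈ schemeT P suppF q0 q, schemeCost q0 q w ≤ schemeCost q0 q w') ∧
      (Finset.univ.filter (fun h => 0 < w h)).card ≤ (∑ i, (suppF i).card) - N + 1 := by
  rcases Nat.eq_zero_or_pos N with hN | hN
  · subst hN
    refine ⟨0, ⟨fun h => le_refl 0, fun i => i.elim0⟩, ?_, ?_⟩
    · intro w' hw'
      simp [schemeCost]
    · simp
  rcases Nat.eq_zero_or_pos m with hm | hm
  · subst hm
    obtain ⟨w, hw⟩ := hT
    refine ⟨w, hw, fun w' hw' => le_of_eq (by simp [schemeCost]), ?_⟩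
    simp
  -- main case
  have hq' : ∀ h i, q h i ∈ suppF i := fun h i => by
    rw [← Finset.mem_coe, hsuppF]; exact hq h i
  have hSne : ∀ i, (suppF i).Nonempty := fun i => ⟨q ⟨0, hm⟩ i, hq' _ i⟩
  have hprob : ∀ i, IsProbabilityMeasure (P i) := fun i => (hP i).1
  set i₀ : Fin N := ⟨0, hN⟩ with hi₀
  -- boundedness of the scheme
  have hbdd : ∀ w ∈ schemeT P suppF q0 q, ∀ h, w h ∈ Set.Icc (0:ℝ) 1 := by
    intro w hw h
    obtain ⟨hw1, hw2⟩ := hw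
    refine ⟨hw1 h, ?_⟩
    have hmem : h ∈ Finset.univ.filter (fun h' => q h' i₀ = q h i₀) := by simp
    have hle : w h ≤ ∑ h' ∈ Finset.univ.filter (fun h' => q h' i₀ = q h i₀), w h' :=
      Finset.single_le_sum (fun h' _ => hw1 h') hmem
    have heq := hw2 i₀ (q h i₀) (hq' h i₀)
    rw [heq] at hle
    have hle1 : (P i₀ {q h i₀}).toReal ≤ 1 := by
      have h1 : P i₀ {q h i₀} ≤ 1 := by
        haveI := hprob i₀
        exact prob_le_one
      calc (P i₀ {q h i₀}).toReal ≤ (1 : ℝ≥0∞).toReal := ENNReal.toReal_mono one_ne_top h1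
        _ = 1 := by simp
    linarith
  have hclosed : IsClosed (schemeT P suppF q0 q) := by
    have hrw : schemeT P suppF q0 q =
        (⋂ h, {w : Fin m → ℝ | 0 ≤ w h}) ∩
        ⋂ i, ⋂ k ∈ suppF i, {w : Fin m → ℝ |
          ∑ h ∈ Finset.univ.filter (fun h => q h i = k), w h = (P i {k}).toReal} := by
      ext w
      simp [schemeT, Set.mem_iInter]
    rw [hrw]
    refine IsClosed.inter
      (isClosed_iInter fun h => isClosed_le continuous_const (continuous_apply h)) ?_
    refine isClosed_iInter fun i => isClosed_iInter fun k => isClosed_iInter fun _ => ?_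
    exact isClosed_eq (continuous_finset_sum _ fun h _ => continuous_apply h) continuous_const
  have hsub : schemeT P suppF q0 q ⊆ Set.univ.pi (fun _ : Fin m => Set.Icc (0:ℝ) 1) :=
    fun w hw h _ => hbdd w hw h
  have hcpt : IsCompact (schemeT P suppF q0 q) :=
    IsCompact.of_isClosed_subset (isCompact_univ_pi fun _ => isCompact_Icc) hclosed hsub
  have hcont : Continuous (schemeCost q0 q) := by
    unfold schemeCost
    exact continuous_finset_sum _ fun h _ => (continuous_apply h).mul continuous_const
  obtain ⟨w₀, hw₀T, hw₀min⟩ := hcpt.exists_isMinOn hT hcont.continuousOn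
  rw [isMinOn_iff] at hw₀min
  set sSet : Set ℕ := {n | ∃ w ∈ schemeT P suppF q0 q,
    (∀ w' ∈ schemeT P suppF q0 q, schemeCost q0 q w ≤ schemeCost q0 q w') ∧
    (Finset.univ.filter (fun h => 0 < w h)).card = n} with hsSet
  have hsne : sSet.Nonempty := ⟨_, w₀, hw₀T, hw₀min, rfl⟩
  obtain ⟨w, hwT, hwmin, hwcard⟩ := Nat.sInf_mem hsne
  refine ⟨w, hwT, hwmin, ?_⟩
  set K := Finset.univ.filter (fun h => 0 < w h) with hKdef
  by_contra hbig
  push_neg at hbig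
  have hS1 : ∀ i, 1 ≤ (suppF i).card := fun i => Finset.card_pos.mpr (hSne i)
  have hsumeq : ∑ i, (suppF i).card = ∑ i, ((suppF i).card - 1) + N := by
    have h1 : ∑ i, (suppF i).card = ∑ i, (((suppF i).card - 1) + 1) :=
      Finset.sum_congr rfl fun i _ => by have := hS1 i; omega
    rw [h1, Finset.sum_add_distrib]
    simp
  have hK : ∑ i, ((suppF i).card - 1) + 1 < K.card := by omega
  obtain ⟨z, hz0, hzK, hzker⟩ := exists_kernel_vec suppF hSne q hq' K hK
  have hwpos : ∀ h ∈ K, 0 < w h := fun h hh => (Finset.mem_filter.mp hh).2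
  have hwnn : ∀ h, 0 ≤ w h := hwT.1
  set cv : Fin m → ℝ := fun h => ∑ i, ‖q0 h - q h i‖ ^ 2 with hcv
  have hcost : ∀ (t : ℝ) (u : Fin m → ℝ),
      schemeCost q0 q (w + t • u) = schemeCost q0 q w + t * ∑ h, u h * cv h := by
    intro t u
    simp only [schemeCost, Pi.add_apply, Pi.smul_apply, smul_eq_mul, add_mul,
      Finset.sum_add_distrib, hcv]
    congr 1
    rw [Finset.mul_sum]
    exact Finset.sum_congr rfl fun h _ => by ring
  have hfeas : ∀ (t : ℝ) (u : Fin m → ℝ),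
      (∀ i, ∀ k ∈ suppF i, ∑ h ∈ Finset.univ.filter (fun h => q h i = k), u h = 0) →
      (∀ h, 0 ≤ w h + t * u h) → (w + t • u) ∈ schemeT P suppF q0 q := by
    intro t u hker hnn
    refine ⟨fun h => hnn h, fun i k hk => ?_⟩
    have h1 := hwT.2 i k hk
    simp only [Pi.add_apply, Pi.smul_apply, smul_eq_mul]
    rw [Finset.sum_add_distrib, ← Finset.mul_sum, hker i k hk, mul_zero, add_zero]
    exact h1
  -- a small t₀ for two-sided perturbation
  have hKne : K.Nonempty := Finset.card_pos.mp (by omega)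
  obtain ⟨hε, hεK, hεmin⟩ := K.exists_min_image w hKne
  have hεpos : 0 < w hε := hwpos _ hεK
  obtain ⟨hM, _, hMmax⟩ := Finset.univ.exists_max_image (fun h => |z h|)
    ⟨⟨0, hm⟩, Finset.mem_univ _⟩
  set M := |z hM| with hMdef
  have hMnn : 0 ≤ M := abs_nonneg _
  set t₀ : ℝ := w hε / (M + 1) with ht₀
  have ht₀pos : 0 < t₀ := div_pos hεpos (by linarith)
  have hsmall : ∀ h, z h ≠ 0 → t₀ * |z h| < w h := by
    intro h hzh
    have hhK : h ∈ K := by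
      by_contra hc; exact hzh (hzK h hc)
    have h1 : t₀ * |z h| ≤ t₀ * M :=
      mul_le_mul_of_nonneg_left (hMmax h (Finset.mem_univ h)) ht₀pos.le
    have h2 : t₀ * M < w hε := by
      rw [ht₀, div_mul_eq_mul_div, div_lt_iff₀ (by linarith : (0:ℝ) < M + 1)]
      nlinarith
    have h3 := hεmin h hhK
    linarith
  have hnn₀ : ∀ (s : ℝ), |s| ≤ t₀ → ∀ h, 0 ≤ w h + s * z h := by
    intro s hs h
    by_cases hzh : z h = 0
    · rw [hzh]; simpa using hwnn h
    · have h2 := hsmall h hzh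
      have h4 : |s * z h| ≤ t₀ * |z h| := by
        rw [abs_mul]
        exact mul_le_mul_of_nonneg_right hs (abs_nonneg _)
      have h5 := neg_abs_le (s * z h)
      linarith
  have hcz : ∑ h, z h * cv h = 0 := by
    have hp := hwmin _ (hfeas t₀ z hzker (hnn₀ t₀ (le_of_eq (abs_of_pos ht₀pos))))
    have hq2 := hwmin _ (hfeas (-t₀) z hzker
      (hnn₀ (-t₀) (by rw [abs_neg]; exact le_of_eq (abs_of_pos ht₀pos))))
    rw [hcost] at hp hq2
    nlinarith
  -- the descent step
  have final : ∀ u : Fin m → ℝ, (∀ h ∉ K, u h = 0) →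
      (∀ i, ∀ k ∈ suppF i, ∑ h ∈ Finset.univ.filter (fun h => q h i = k), u h = 0) →
      (∑ h, u h * cv h = 0) → (∃ h, u h < 0) → False := by
    rintro u huK huker hucz ⟨h₁, hh₁⟩
    set T := K.filter (fun h => u h < 0) with hT'
    have hTne : T.Nonempty := by
      refine ⟨h₁, Finset.mem_filter.mpr ⟨?_, hh₁⟩⟩
      by_contra hc
      rw [huK h₁ hc] at hh₁
      exact lt_irrefl 0 hh₁
    obtain ⟨h₀, hh₀T, hh₀min⟩ := T.exists_min_image (fun h => w h / (-u h)) hTne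
    have hh₀K : h₀ ∈ K := (Finset.mem_filter.mp hh₀T).1
    have hh₀neg : u h₀ < 0 := (Finset.mem_filter.mp hh₀T).2
    set t := w h₀ / (-u h₀) with htdef
    have htpos : 0 < t := div_pos (hwpos _ hh₀K) (by linarith)
    have hnn : ∀ h, 0 ≤ w h + t * u h := by
      intro h
      rcases lt_or_ge (u h) 0 with hneg | hpos
      · have hhK : h ∈ K := by
          by_contra hc; rw [huK h hc] at hneg; exact lt_irrefl 0 hneg
        have hmem : h ∈ T := Finset.mem_filter.mpr ⟨hhK, hneg⟩
        have h1 := hh₀min h hmem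
        rw [le_div_iff₀ (by linarith : (0:ℝ) < -u h)] at h1
        nlinarith
      · nlinarith [hwnn h]
    have hw'T := hfeas t u huker hnn
    have hw'min : ∀ w' ∈ schemeT P suppF q0 q,
        schemeCost q0 q (w + t • u) ≤ schemeCost q0 q w' := by
      intro w' hw'
      rw [hcost, hucz, mul_zero, add_zero]
      exact hwmin w' hw'
    have hune : u h₀ ≠ 0 := ne_of_lt hh₀neg
    have hzeroh₀ : (w + t • u) h₀ = 0 := by
      have hmul : w h₀ / (-u h₀) * u h₀ = -w h₀ := by
        rw [div_mul_eq_mul_div, div_neg, mul_div_assoc, div_self hune, mul_one]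
      simp only [Pi.add_apply, Pi.smul_apply, smul_eq_mul, htdef, hmul]
      ring
    have hsubK : (Finset.univ.filter fun h => 0 < (w + t • u) h) ⊆ K.erase h₀ := by
      intro h hh
      have hpos' : 0 < (w + t • u) h := (Finset.mem_filter.mp hh).2
      refine Finset.mem_erase.mpr ⟨?_, ?_⟩
      · rintro rfl; rw [hzeroh₀] at hpos'; exact lt_irrefl 0 hpos'
      · by_contra hc
        have hnotpos : ¬ 0 < w h := fun hp =>
          hc (Finset.mem_filter.mpr ⟨Finset.mem_univ h, hp⟩)
        have hw0 : w h = 0 := le_antisymm (not_lt.mp hnotpos) (hwnn h)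
        simp only [Pi.add_apply, Pi.smul_apply, smul_eq_mul, hw0, huK h hc,
          mul_zero, add_zero] at hpos'
        exact lt_irrefl 0 hpos'
    have hcard' : (Finset.univ.filter fun h => 0 < (w + t • u) h).card < K.card :=
      lt_of_le_of_lt (Finset.card_le_card hsubK) (Finset.card_erase_lt_of_mem hh₀K)
    have hmemS : (Finset.univ.filter fun h => 0 < (w + t • u) h).card ∈ sSet :=
      ⟨_, hw'T, hw'min, rfl⟩
    have hle := Nat.sInf_le hmemS
    omega
  obtain ⟨h₁, hh₁⟩ := Function.ne_iff.mp hz0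
  rcases lt_or_gt_of_ne hh₁ with hneg | hpos
  · exact final z hzK hzker hcz ⟨h₁, hneg⟩
  · refine final (-z) (fun h hh => by rw [Pi.neg_apply, hzK h hh, neg_zero])
      (fun i k hk => ?_) ?_ ⟨h₁, ?_⟩
    · simp only [Pi.neg_apply]
      rw [Finset.sum_neg_distrib, hzker i k hk, neg_zero]
    · simp only [Pi.neg_apply, neg_mul]
      rw [Finset.sum_neg_distrib, hcz, neg_zero]
    · simp only [Pi.neg_apply]
      exact neg_lt_zero.mpr hpos
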